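/- arXiv:1611.06496 — 3 statements merged into one kernel-verified Lean document; each statement's English description precedes it below -/
import Mathlib

section
/- Let V be a real inner product space of even dimension n = 2m and let J be an orthogonal complex structure on V. Then the real vector space of all skew-adjoint endomorphisms of V that anticommute with J (i.e., the tangent space T_J F(V) of the manifold F(V) of orthogonal complex structures) has dimension m² − m. -/
open scoped RealInnerProductSpace
open Matrix

/-- The tangent space `T_J F(V)`: the submodule of skew-adjoint endomorphisms of `V`
that anticommute with `J`. -/
def tangentSpaceAt {V : Type*} [NormedAddCommGroup V] [InnerProductSpace ℝ V]
    (J : V →ₗ[ℝ] V) : Submodule ℝ (V →ₗ[ℝ] V) where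
  carrier := {Q | (∀ x y : V, ⟪Q x, y⟫ = -⟪x, Q y⟫) ∧ Q ∘ₗ J = -(J ∘ₗ Q)}
  add_mem' := by
    rintro A B ⟨hA1, hA2⟩ ⟨hB1, hB2⟩
    refine ⟨fun x y => ?_, ?_⟩
    · simp only [LinearMap.add_apply, inner_add_left, inner_add_right, hA1 x y, hB1 x y]
      ring
    · rw [LinearMap.add_comp, LinearMap.comp_add, hA2, hB2, neg_add]
  zero_mem' := by
    refine ⟨fun x y => by simp, ?_⟩
    rw [LinearMap.zero_comp, LinearMap.comp_zero, neg_zero]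
  smul_mem' := by
    rintro c A ⟨hA1, hA2⟩
    refine ⟨fun x y => ?_, ?_⟩
    · simp only [LinearMap.smul_apply, real_inner_smul_left, real_inner_smul_right, hA1 x y]
      ring
    · rw [LinearMap.smul_comp, LinearMap.comp_smul, hA2, smul_neg]


/-- The submodule of skew-symmetric `m × m` real matrices. -/
def skewSub (m : ℕ) : Submodule ℝ (Matrix (Fin m) (Fin m) ℝ) where
  carrier := {A | Aᵀ = -A}
  add_mem' := by intro A B hA hB; simp_all [Matrix.transpose_add, neg_add]; abel
  zero_mem' := by simp
  smul_mem' := by intro c A hA; simp_all [Matrix.transpose_smul]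

/-- Strict upper triangular index set. -/
abbrev UT (m : ℕ) := {p : Fin m × Fin m // p.1 < p.2}

noncomputable def skewEquiv (m : ℕ) : skewSub m ≃ₗ[ℝ] (UT m → ℝ) where
  toFun A p := (A : Matrix (Fin m) (Fin m) ℝ) p.1.1 p.1.2
  map_add' A B := by funext p; simp
  map_smul' c A := by funext p; simp
  invFun f := ⟨fun i j => if h : i < j then f ⟨(i, j), h⟩ else
      if h : j < i then -f ⟨(j, i), h⟩ else 0, by
    show Matrix.transpose _ = -_
    funext i j
    change (if h : j < i then f ⟨(j, i), h⟩ else if h : i < j then -f ⟨(i, j), h⟩ else 0) = -(if h : i < j then f ⟨(i, j), h⟩ else if h : j < i then -f ⟨(j, i), h⟩ else 0)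
    rcases lt_trichotomy i j with h | h | h
    · rw [dif_neg (asymm h), dif_pos h, dif_pos h]
    · subst h; simp
    · rw [dif_pos h, dif_neg (asymm h), dif_pos h, neg_neg]⟩
  left_inv A := by
    ext i j
    have hA := A.2
    simp only [skewSub, Submodule.mem_mk, AddSubmonoid.mem_mk, AddSubsemigroup.mem_mk,
      Set.mem_setOf_eq] at hA
    simp only
    rcases lt_trichotomy i j with h | h | h
    · rw [dif_pos h]
    · subst h
      rw [dif_neg (lt_irrefl i), dif_neg (lt_irrefl i)]
      have := congrFun (congrFun hA i) i
      simp only [Matrix.transpose_apply, Matrix.neg_apply] at this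
      linarith
    · rw [dif_neg (asymm h), dif_pos h]
      have := congrFun (congrFun hA j) i
      simp only [Matrix.transpose_apply, Matrix.neg_apply] at this
      linarith
  right_inv f := by
    funext p
    simp only
    rw [dif_pos p.2]

def utEquiv (m : ℕ) : UT m ≃ Σ j : Fin m, Fin j.val where
  toFun p := ⟨p.1.2, ⟨p.1.1.val, p.2⟩⟩
  invFun x := ⟨(⟨x.2.val, x.2.2.trans x.1.2⟩, x.1), x.2.2⟩
  left_inv p := by ext <;> simp
  right_inv x := by ext <;> simp

lemma card_UT (m : ℕ) : Fintype.card (UT m) * 2 = m * (m - 1) := by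
  rw [Fintype.card_congr (utEquiv m), Fintype.card_sigma]
  simp only [Fintype.card_fin]
  rw [Fin.sum_univ_eq_sum_range (fun j => j) m, Finset.sum_range_id_mul_two]

lemma finrank_skewSub (m : ℕ) : Module.finrank ℝ (skewSub m) * 2 = m * (m - 1) := by
  rw [(skewEquiv m).finrank_eq, Module.finrank_fintype_fun_eq_card, card_UT]

lemma mem_skewSub {m : ℕ} {A : Matrix (Fin m) (Fin m) ℝ} : A ∈ skewSub m ↔ Aᵀ = -A := Iff.rfl

/-- standard complex structure matrix -/
def J0 (m : ℕ) : Matrix (Fin m ⊕ Fin m) (Fin m ⊕ Fin m) ℝ :=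
  Matrix.fromBlocks 0 (-1) 1 0

def tanMat (m : ℕ) : Submodule ℝ (Matrix (Fin m ⊕ Fin m) (Fin m ⊕ Fin m) ℝ) where
  carrier := {M | Mᵀ = -M ∧ M * J0 m = -(J0 m * M)}
  add_mem' := by
    rintro A B ⟨hA1, hA2⟩ ⟨hB1, hB2⟩
    constructor
    · rw [Matrix.transpose_add, hA1, hB1]; abel
    · rw [Matrix.add_mul, Matrix.mul_add, hA2, hB2]; abel
  zero_mem' := by constructor <;> simp
  smul_mem' := by
    rintro c A ⟨hA1, hA2⟩
    constructor
    · rw [Matrix.transpose_smul, hA1, smul_neg]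
    · rw [Matrix.smul_mul, Matrix.mul_smul, hA2, smul_neg]

lemma mem_tanMat {m : ℕ} {M : Matrix (Fin m ⊕ Fin m) (Fin m ⊕ Fin m) ℝ} :
    M ∈ tanMat m ↔ Mᵀ = -M ∧ M * J0 m = -(J0 m * M) := Iff.rfl

lemma mem_tanMat_fromBlocks {m : ℕ} {A B C D : Matrix (Fin m) (Fin m) ℝ} :
    Matrix.fromBlocks A B C D ∈ tanMat m ↔ Aᵀ = -A ∧ Bᵀ = -B ∧ C = B ∧ D = -A := by
  rw [mem_tanMat]
  unfold J0
  rw [Matrix.fromBlocks_transpose, Matrix.fromBlocks_multiply, Matrix.fromBlocks_multiply]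
  simp only [Matrix.mul_zero, Matrix.zero_mul, Matrix.mul_one, Matrix.one_mul, Matrix.mul_neg,
    Matrix.neg_mul, zero_add, add_zero, Matrix.fromBlocks_neg, Matrix.ext_iff_blocks,
    Matrix.toBlocks_fromBlocks₁₁, Matrix.toBlocks_fromBlocks₁₂, Matrix.toBlocks_fromBlocks₂₁,
    Matrix.toBlocks_fromBlocks₂₂, neg_neg]
  constructor
  · rintro ⟨⟨h1, h2, h3, h4⟩, h5, h6, h7, h8⟩
    exact ⟨h1, by rw [h3, h5], h5.symm, h7⟩
  · rintro ⟨h1, h2, h3, h4⟩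
    subst h3; subst h4
    exact ⟨⟨h1, h2, h2, by simp [Matrix.transpose_neg, h1]⟩, rfl, rfl, rfl, rfl⟩

lemma tanMat_blocks {m : ℕ} (M : tanMat m) :
    (M.1.toBlocks₁₁)ᵀ = -M.1.toBlocks₁₁ ∧ (M.1.toBlocks₂₁)ᵀ = -M.1.toBlocks₂₁ ∧
      M.1.toBlocks₁₂ = M.1.toBlocks₂₁ ∧ M.1.toBlocks₂₂ = -M.1.toBlocks₁₁ := by
  have h := mem_tanMat_fromBlocks.mp (by rw [Matrix.fromBlocks_toBlocks]; exact M.2)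
  exact ⟨h.1, by rw [h.2.2.1]; exact h.2.1, h.2.2.1.symm, h.2.2.2⟩

noncomputable def tanMatEquiv (m : ℕ) : tanMat m ≃ₗ[ℝ] skewSub m × skewSub m where
  toFun M := (⟨M.1.toBlocks₁₁, mem_skewSub.mpr (tanMat_blocks M).1⟩,
    ⟨M.1.toBlocks₂₁, mem_skewSub.mpr (tanMat_blocks M).2.1⟩)
  map_add' M N := by
    refine Prod.ext (Subtype.ext ?_) (Subtype.ext ?_) <;> funext i j <;>
      simp [Matrix.toBlocks₁₁, Matrix.toBlocks₂₁]
  map_smul' c M := by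
    refine Prod.ext (Subtype.ext ?_) (Subtype.ext ?_) <;> funext i j <;>
      simp [Matrix.toBlocks₁₁, Matrix.toBlocks₂₁]
  invFun p := ⟨Matrix.fromBlocks p.1 p.2 p.2 (-p.1),
    mem_tanMat_fromBlocks.mpr ⟨mem_skewSub.mp p.1.2, mem_skewSub.mp p.2.2, rfl, rfl⟩⟩
  left_inv M := by
    apply Subtype.ext
    dsimp only
    conv_rhs => rw [← Matrix.fromBlocks_toBlocks M.1]
    rw [(tanMat_blocks M).2.2.1, (tanMat_blocks M).2.2.2]
  right_inv p := by
    refine Prod.ext (Subtype.ext ?_) (Subtype.ext ?_) <;>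
      simp [Matrix.toBlocks_fromBlocks₁₁, Matrix.toBlocks_fromBlocks₂₁]

lemma finrank_tanMat (m : ℕ) : Module.finrank ℝ (tanMat m) = m ^ 2 - m := by
  rw [(tanMatEquiv m).finrank_eq, Module.finrank_prod]
  have h := finrank_skewSub m
  have h2 : m * (m - 1) = m ^ 2 - m := by
    cases m with
    | zero => simp
    | succ k =>
        have h3 : (k + 1) ^ 2 = (k + 1) * k + (k + 1) := by ring
        simp only [Nat.add_sub_cancel]
        omega
  omega

lemma exists_adapted_basis (m : ℕ) :
    ∀ (V : Type*) [NormedAddCommGroup V] [InnerProductSpace ℝ V] [FiniteDimensional ℝ V]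
      (J : V →ₗ[ℝ] V), Module.finrank ℝ V = 2 * m →
      (∀ x y : V, ⟪J x, y⟫ = -⟪x, J y⟫) → J ∘ₗ J = -LinearMap.id →
      ∃ b : OrthonormalBasis (Fin m ⊕ Fin m) ℝ V,
        (∀ i, J (b (Sum.inl i)) = b (Sum.inr i)) ∧
          ∀ i, J (b (Sum.inr i)) = -b (Sum.inl i) := by
  induction m with
  | zero =>
    intro V _ _ _ J hdim _ _
    have hss : Subsingleton V := by
      rw [← Module.finrank_zero_iff (R := ℝ)]
      omega
    have hon : Orthonormal ℝ (⇑(Module.Basis.empty V : Module.Basis (Fin 0 ⊕ Fin 0) ℝ V)) := by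
      constructor
      · intro i; exact isEmptyElim i
      · intro i; exact isEmptyElim i
    exact ⟨(Module.Basis.empty V).toOrthonormalBasis hon, fun i => i.elim0, fun i => i.elim0⟩
  | succ k ih =>
    intro V _ _ _ J hdim hskew hJ2
    have hJJ : ∀ x : V, J (J x) = -x := by
      intro x
      have := LinearMap.ext_iff.mp hJ2 x
      simpa using this
    have hJinner : ∀ x y : V, ⟪J x, J y⟫ = ⟪x, y⟫ := by
      intro x y
      rw [hskew x (J y), hJJ y, inner_neg_right, neg_neg]
    have hnt : Nontrivial V := by
      rw [← Module.finrank_pos_iff (R := ℝ)]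
      omega
    obtain ⟨x, hx⟩ := exists_ne (0 : V)
    set e : V := ‖x‖⁻¹ • x with he
    have he1 : ‖e‖ = 1 := norm_smul_inv_norm hx
    have hee : ⟪e, e⟫ = 1 := by
      rw [real_inner_self_eq_norm_mul_norm, he1]; norm_num
    have hJee : ⟪J e, e⟫ = 0 := by
      have h1 := hskew e e
      have h2 := real_inner_comm e (J e)
      linarith
    have heJe : ⟪e, J e⟫ = 0 := by rw [real_inner_comm]; exact hJee
    have hJeJe : ⟪J e, J e⟫ = 1 := by rw [hJinner, hee]
    have hJe1 : ‖J e‖ = 1 := by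
      have := real_inner_self_eq_norm_mul_norm (J e)
      nlinarith [norm_nonneg (J e)]
    -- the span of e and J e
    set U : Submodule ℝ V := Submodule.span ℝ (Set.range ![e, J e]) with hU
    have horth : Orthonormal ℝ ![e, J e] := by
      rw [orthonormal_iff_ite]
      intro i j
      fin_cases i <;> fin_cases j <;>
        simp [hee, heJe, hJee, hJeJe, he1, hJe1]
    have hU2 : Module.finrank ℝ U = 2 := by
      rw [hU, finrank_span_eq_card horth.linearIndependent]
      simp
    set W := Uᗮ with hW
    have hWrank : Module.finrank ℝ W = 2 * k := by
      have := U.finrank_add_finrank_orthogonal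
      rw [← hW, hU2, hdim] at this
      omega
    have heU : e ∈ U := Submodule.subset_span ⟨0, rfl⟩
    have hJeU : J e ∈ U := Submodule.subset_span ⟨1, rfl⟩
    have hWe : ∀ w ∈ W, ⟪e, w⟫ = 0 := fun w hw => hw e heU
    have hWJe : ∀ w ∈ W, ⟪J e, w⟫ = 0 := fun w hw => hw (J e) hJeU
    have hJW : ∀ w ∈ W, J w ∈ W := by
      intro w hw
      rw [hW, Submodule.mem_orthogonal]
      intro u hu
      induction hu using Submodule.span_induction with
      | mem u hu =>
        rcases hu with ⟨i, rfl⟩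
        fin_cases i
        · show ⟪e, J w⟫ = 0
          have h1 := hskew w e
          have h2 := hWJe w hw
          have h3 := real_inner_comm e (J w)
          have h4 := real_inner_comm w (J e)
          linarith
        · show ⟪J e, J w⟫ = 0
          rw [hJinner, hWe w hw]
      | zero => simp
      | add u v _ _ h1 h2 => rw [inner_add_left, h1, h2, add_zero]
      | smul c u _ h1 => rw [real_inner_smul_left, h1, mul_zero]
    -- restrict J to W
    set J' : W →ₗ[ℝ] W := J.restrict hJW with hJ'
    have hJ'coe : ∀ w : W, (J' w : V) = J (w : V) := fun w =>
      LinearMap.restrict_coe_apply J hJW w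
    have hskew' : ∀ x y : W, ⟪J' x, y⟫ = -⟪x, J' y⟫ := by
      intro x y
      rw [Submodule.coe_inner, Submodule.coe_inner, hJ'coe, hJ'coe]
      exact hskew x y
    have hJ2' : J' ∘ₗ J' = -LinearMap.id := by
      apply LinearMap.ext
      intro w
      apply Subtype.ext
      rw [LinearMap.comp_apply]
      rw [LinearMap.neg_apply, LinearMap.id_apply]
      rw [hJ'coe, hJ'coe]
      rw [hJJ]
      simp
    obtain ⟨b', hb1, hb2⟩ := ih W J' hWrank hskew' hJ2'
    have hbW : ∀ p, ((b' p : V) ∈ W) := fun p => (b' p).2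
    have hbinner : ∀ p q, ⟪(b' p : V), (b' q : V)⟫ = if p = q then 1 else 0 := by
      intro p q
      have := (orthonormal_iff_ite (𝕜 := ℝ)).mp b'.orthonormal p q
      rwa [Submodule.coe_inner] at this
    -- the new family
    set v : Fin (k + 1) ⊕ Fin (k + 1) → V :=
      Sum.elim (Fin.cases e fun i => (b' (Sum.inl i) : V))
        (Fin.cases (J e) fun i => (b' (Sum.inr i) : V)) with hv
    have hv1 : v (Sum.inl 0) = e := rfl
    have hv2 : v (Sum.inr 0) = J e := rfl
    have hv3 : ∀ i : Fin k, v (Sum.inl i.succ) = (b' (Sum.inl i) : V) := by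
      intro i; simp [hv]
    have hv4 : ∀ i : Fin k, v (Sum.inr i.succ) = (b' (Sum.inr i) : V) := by
      intro i; simp [hv]
    have honv : Orthonormal ℝ v := by
      rw [orthonormal_iff_ite]
      have hbe : ∀ p, ⟪e, (b' p : V)⟫ = 0 := fun p => hWe _ (hbW p)
      have hbJe : ∀ p, ⟪J e, (b' p : V)⟫ = 0 := fun p => hWJe _ (hbW p)
      have heb : ∀ p, ⟪(b' p : V), e⟫ = 0 := fun p => by
        rw [real_inner_comm]; exact hbe p
      have hJeb : ∀ p, ⟪(b' p : V), J e⟫ = 0 := fun p => by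
        rw [real_inner_comm]; exact hbJe p
      rintro (i | i) (j | j)
      · induction i using Fin.cases with
        | zero =>
          induction j using Fin.cases with
          | zero => rw [hv1, if_pos rfl]; exact hee
          | succ j => rw [hv1, hv3, if_neg (by simp [(Fin.succ_ne_zero j).symm]), hbe]
        | succ i =>
          induction j using Fin.cases with
          | zero => rw [hv3, hv1, if_neg (by simp [Fin.succ_ne_zero]), heb]
          | succ j =>
            rw [hv3, hv3, hbinner]
            simp [Fin.succ_inj]
      · induction i using Fin.cases with
        | zero =>
          induction j using Fin.cases with
          | zero => rw [hv1, hv2, if_neg (by simp)]; exact heJe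
          | succ j => rw [hv1, hv4, if_neg (by simp), hbe]
        | succ i =>
          induction j using Fin.cases with
          | zero => rw [hv3, hv2, if_neg (by simp), hJeb]
          | succ j => rw [hv3, hv4, hbinner, if_neg (by simp), if_neg (by simp)]
      · induction i using Fin.cases with
        | zero =>
          induction j using Fin.cases with
          | zero => rw [hv2, hv1, if_neg (by simp)]; exact hJee
          | succ j => rw [hv2, hv3, if_neg (by simp), hbJe]
        | succ i =>
          induction j using Fin.cases with
          | zero => rw [hv4, hv1, if_neg (by simp), heb]
          | succ j => rw [hv4, hv3, hbinner, if_neg (by simp), if_neg (by simp)]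
      · induction i using Fin.cases with
        | zero =>
          induction j using Fin.cases with
          | zero => rw [hv2, if_pos rfl]; exact hJeJe
          | succ j => rw [hv2, hv4, if_neg (by simp [(Fin.succ_ne_zero j).symm]), hbJe]
        | succ i =>
          induction j using Fin.cases with
          | zero => rw [hv4, hv2, if_neg (by simp [Fin.succ_ne_zero]), hJeb]
          | succ j =>
            rw [hv4, hv4, hbinner]
            simp [Fin.succ_inj]
    have hcard : Fintype.card (Fin (k + 1) ⊕ Fin (k + 1)) = Module.finrank ℝ V := by
      simp only [Fintype.card_sum, Fintype.card_fin, hdim]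
      omega
    have hsp : ⊤ ≤ Submodule.span ℝ (Set.range v) :=
      (honv.linearIndependent.span_eq_top_of_card_eq_finrank hcard).ge
    refine ⟨OrthonormalBasis.mk honv hsp, ?_, ?_⟩
    · intro i
      rw [OrthonormalBasis.coe_mk]
      induction i using Fin.cases with
      | zero => rw [hv1, hv2]
      | succ i => rw [hv3, hv4, ← hJ'coe, hb1]
    · intro i
      rw [OrthonormalBasis.coe_mk]
      induction i using Fin.cases with
      | zero => rw [hv2, hv1, hJJ]
      | succ i =>
          rw [hv4, hv3, ← hJ'coe, hb2]
          simp
/-- Let `V` be a real inner product space of even dimension `n = 2m` and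
let `J` be an orthogonal complex structure on `V`.  Then the real vector space of
skew-adjoint endomorphisms of `V` anticommuting with `J` has dimension `m² - m`. -/
theorem stmt_2 {V : Type*} [NormedAddCommGroup V] [InnerProductSpace ℝ V]
    [FiniteDimensional ℝ V] (m : ℕ) (hdim : Module.finrank ℝ V = 2 * m)
    (J : V →ₗ[ℝ] V) (hJskew : ∀ x y : V, ⟪J x, y⟫ = -⟪x, J y⟫)
    (hJ2 : J ∘ₗ J = -LinearMap.id) :
    Module.finrank ℝ (tangentSpaceAt J) = m ^ 2 - m := by
  obtain ⟨b, hb1, hb2⟩ := exists_adapted_basis m V J hdim hJskew hJ2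
  set eM := LinearMap.toMatrix b.toBasis b.toBasis with heM
  have hJ0 : eM J = J0 m := by
    apply Matrix.ext
    intro i j
    rcases j with j | j
    · rw [heM, LinearMap.toMatrix_apply, OrthonormalBasis.coe_toBasis, hb1 j,
        ← OrthonormalBasis.coe_toBasis, Module.Basis.repr_self]
      rcases i with i | i <;>
        simp [J0, Matrix.fromBlocks, Finsupp.single_apply, Matrix.one_apply, eq_comm]
    · rw [heM, LinearMap.toMatrix_apply, OrthonormalBasis.coe_toBasis, hb2 j,
        ← OrthonormalBasis.coe_toBasis, map_neg, Module.Basis.repr_self]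
      rcases i with i | i <;>
        simp [J0, Matrix.fromBlocks, Finsupp.single_apply, Matrix.one_apply, eq_comm]
  have hadj : ∀ Q : V →ₗ[ℝ] V, (∀ x y : V, ⟪Q x, y⟫ = -⟪x, Q y⟫) ↔
      LinearMap.adjoint Q = -Q := by
    intro Q
    rw [eq_comm, LinearMap.eq_adjoint_iff]
    constructor
    · intro h x y
      rw [LinearMap.neg_apply, inner_neg_left, h, neg_neg]
    · intro h x y
      have := h x y
      rw [LinearMap.neg_apply, inner_neg_left] at this
      linarith
  have key : ∀ Q : V →ₗ[ℝ] V, Q ∈ tangentSpaceAt J ↔ eM Q ∈ tanMat m := by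
    intro Q
    rw [mem_tanMat, ← hJ0]
    constructor
    · rintro ⟨h1, h2⟩
      constructor
      · have := (hadj Q).mp h1
        have h3 := congrArg eM this
        rw [map_neg] at h3
        rw [← h3, heM]
        rw [LinearMap.toMatrix_adjoint b b Q, Matrix.conjTranspose_eq_transpose_of_trivial]
      · have h3 := congrArg eM h2
        rw [map_neg, heM, LinearMap.toMatrix_comp _ b.toBasis _,
          LinearMap.toMatrix_comp _ b.toBasis _] at h3
        exact h3
    · rintro ⟨h1, h2⟩
      constructor
      · apply (hadj Q).mpr
        apply eM.injective
        rw [map_neg, heM, LinearMap.toMatrix_adjoint b b Q,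
          Matrix.conjTranspose_eq_transpose_of_trivial, h1]
      · apply eM.injective
        rw [map_neg, heM, LinearMap.toMatrix_comp _ b.toBasis _,
          LinearMap.toMatrix_comp _ b.toBasis _]
        exact h2
  have hmap : (tangentSpaceAt J).map
      (eM : (V →ₗ[ℝ] V) →ₗ[ℝ] Matrix (Fin m ⊕ Fin m) (Fin m ⊕ Fin m) ℝ) = tanMat m := by
    apply Submodule.ext
    intro M
    rw [Submodule.mem_map_equiv, key (eM.symm M), LinearEquiv.apply_symm_apply]
  have h5 := LinearEquiv.finrank_eq (eM.submoduleMap (tangentSpaceAt J))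
  rw [hmap, finrank_tanMat] at h5
  omega
end

section
/- Let V be a finite-dimensional real inner product space. If J₁ and J₂ are two orthogonal complex structures on V, then there exists an orthogonal linear automorphism Q of V with J₂ = Q ∘ J₁ ∘ Q⁻¹; that is, the orthogonal group O(V) acts transitively by conjugation on the set F(V) of orthogonal complex structures on V. -/
open scoped RealInnerProductSpace

namespace StmtThreeAux

open Module

variable {V : Type*} [NormedAddCommGroup V] [InnerProductSpace ℝ V]

/-- `J` is an orthogonal complex structure. -/
def IsOCS (J : V →ₗ[ℝ] V) : Prop :=
  (∀ x y : V, ⟪J x, y⟫ = -⟪x, J y⟫) ∧ J ∘ₗ J = -LinearMap.id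

theorem IsOCS.skew {J : V →ₗ[ℝ] V} (h : IsOCS J) (x y : V) : ⟪J x, y⟫ = -⟪x, J y⟫ := h.1 x y

theorem IsOCS.sq {J : V →ₗ[ℝ] V} (h : IsOCS J) (x : V) : J (J x) = -x := by
  have := congrFun (congrArg (fun f : V →ₗ[ℝ] V => (f : V → V)) h.2) x
  simpa using this

theorem IsOCS.inner_J_J {J : V →ₗ[ℝ] V} (h : IsOCS J) (x y : V) : ⟪J x, J y⟫ = ⟪x, y⟫ := by
  rw [h.skew x (J y), h.sq y, inner_neg_right]; ring

theorem IsOCS.inner_J_self {J : V →ₗ[ℝ] V} (h : IsOCS J) (x : V) : ⟪J x, x⟫ = 0 := by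
  have h1 := h.skew x x
  have h2 : ⟪J x, x⟫ = ⟪x, J x⟫ := real_inner_comm _ _
  linarith [h1, h2]

/-- Type synonym for `V` regarded as a complex vector space via `J`. -/
def CV (_J : V →ₗ[ℝ] V) : Type _ := V

variable (J : V →ₗ[ℝ] V)

instance : NormedAddCommGroup (CV J) := inferInstanceAs (NormedAddCommGroup V)
instance : InnerProductSpace ℝ (CV J) := inferInstanceAs (InnerProductSpace ℝ V)
instance [FiniteDimensional ℝ V] : FiniteDimensional ℝ (CV J) :=
  inferInstanceAs (FiniteDimensional ℝ V)

/-- `J` as a map on `CV J`. -/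
def JC : CV J → CV J := fun v => show CV J from J (show V from v)

theorem JC_eq (v : V) : JC J (show CV J from v) = J v := rfl

variable [hJ : Fact (IsOCS J)]

noncomputable instance : SMul ℂ (CV J) :=
  ⟨fun c v => c.re • v + c.im • JC J v⟩

theorem csmul_def (c : ℂ) (v : CV J) :
    c • v = c.re • v + c.im • JC J v := rfl

omit hJ in
theorem JC_add (v w : CV J) : JC J (v + w) = JC J v + JC J w := map_add J _ _

omit hJ in
theorem JC_smul (r : ℝ) (v : CV J) : JC J (r • v) = r • JC J v := map_smul J r _

theorem JC_JC (v : CV J) : JC J (JC J v) = -v := hJ.out.sq (show V from v)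

omit hJ in
theorem JC_zero : JC J 0 = 0 := map_zero J

noncomputable instance : Module ℂ (CV J) where
  one_smul v := by simp [csmul_def]
  mul_smul a b v := by
    simp only [csmul_def, Complex.mul_re, Complex.mul_im, JC_add, JC_smul, JC_JC,
      smul_add, smul_smul, smul_neg, sub_smul, add_smul]
    abel
  smul_zero c := by simp [csmul_def, JC_zero]
  smul_add c v w := by
    simp only [csmul_def, JC_add, smul_add]
    abel
  add_smul a b v := by
    simp only [csmul_def, Complex.add_re, Complex.add_im, add_smul]
    abel
  zero_smul v := by simp [csmul_def, JC_zero]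

omit hJ in
theorem inner_JC_left (v w : CV J) : ⟪JC J v, w⟫ = ⟪J (show V from v), (show V from w)⟫ := rfl

theorem real_inner_csmul_self (c : ℂ) (v : CV J) :
    ⟪(c • v : CV J), (c • v : CV J)⟫ = ‖c‖ ^ 2 * ⟪v, v⟫ := by
  rw [csmul_def, inner_add_add_self]
  simp only [real_inner_smul_left, real_inner_smul_right]
  have h1 : ⟪JC J v, JC J v⟫ = ⟪v, v⟫ := hJ.out.inner_J_J (show V from v) (show V from v)
  have h2 : ⟪JC J v, v⟫ = 0 := hJ.out.inner_J_self (show V from v)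
  have h3 : ⟪v, JC J v⟫ = 0 := by
    rw [real_inner_comm]; exact h2
  rw [h1, h2, h3, Complex.sq_norm, Complex.normSq_apply]
  ring

theorem norm_csmul (c : ℂ) (v : CV J) : ‖c • v‖ = ‖c‖ * ‖v‖ := by
  have h := real_inner_csmul_self J c v
  have h1 : ‖c • v‖ ^ 2 = (‖c‖ * ‖v‖) ^ 2 := by
    rw [← real_inner_self_eq_norm_sq (c • v : CV J), h, real_inner_self_eq_norm_sq]
    ring
  calc ‖c • v‖ = Real.sqrt (‖c • v‖ ^ 2) := (Real.sqrt_sq (norm_nonneg _)).symm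
    _ = Real.sqrt ((‖c‖ * ‖v‖) ^ 2) := by rw [h1]
    _ = ‖c‖ * ‖v‖ := Real.sqrt_sq (by positivity)

noncomputable instance : NormedSpace ℂ (CV J) where
  norm_smul_le c v := le_of_eq (norm_csmul J c v)

noncomputable instance : Inner ℂ (CV J) :=
  ⟨fun x y => (⟪x, y⟫ : ℝ) + (⟪JC J x, y⟫ : ℝ) * Complex.I⟩

theorem cinner_def (x y : CV J) :
    (inner ℂ x y : ℂ) = (⟪x, y⟫ : ℝ) + (⟪JC J x, y⟫ : ℝ) * Complex.I := rfl

noncomputable instance : InnerProductSpace ℂ (CV J) where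
  norm_sq_eq_re_inner x := by
    have h0 : ⟪JC J x, x⟫ = 0 := hJ.out.inner_J_self (show V from x)
    rw [cinner_def, h0, real_inner_self_eq_norm_sq]
    simp [← Complex.ofReal_pow]
  conj_inner_symm x y := by
    rw [cinner_def, cinner_def]
    have h1 : ⟪(y : CV J), x⟫ = ⟪x, y⟫ := real_inner_comm _ _
    have h2 : ⟪JC J y, x⟫ = -⟪JC J x, y⟫ := by
      rw [inner_JC_left, inner_JC_left, hJ.out.skew, real_inner_comm]
    rw [h1, h2, map_add, map_mul, Complex.conj_I, Complex.conj_ofReal, Complex.conj_ofReal]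
    push_cast
    ring
  add_left x y z := by
    rw [cinner_def, cinner_def, cinner_def, JC_add, inner_add_left, inner_add_left]
    push_cast
    ring
  smul_left x y r := by
    rw [cinner_def, cinner_def, csmul_def, JC_add, JC_smul, JC_smul, JC_JC, inner_add_left,
      real_inner_smul_left, real_inner_smul_left, inner_add_left, real_inner_smul_left,
      real_inner_smul_left, inner_neg_left]
    set a : ℝ := ⟪(x : CV J), y⟫
    set b : ℝ := ⟪JC J x, y⟫
    apply Complex.ext <;>
      simp [Complex.add_re, Complex.add_im, Complex.mul_re, Complex.mul_im] <;> ring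

instance : IsScalarTower ℝ ℂ (CV J) :=
  ⟨fun r c v => by
    rw [csmul_def, csmul_def, Complex.real_smul, Complex.mul_re, Complex.mul_im]
    simp only [Complex.ofReal_re, Complex.ofReal_im, smul_add, smul_smul]
    ring_nf⟩

instance [FiniteDimensional ℝ V] : FiniteDimensional ℂ (CV J) :=
  Module.Finite.right ℝ ℂ (CV J)

theorem finrank_CV [FiniteDimensional ℝ V] : 2 * finrank ℂ (CV J) = finrank ℝ V := by
  have := Module.finrank_mul_finrank ℝ ℂ (CV J)
  rwa [Complex.finrank_real_complex] at this

theorem I_smul (v : CV J) : (Complex.I • v : CV J) = JC J v := by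
  rw [csmul_def]
  simp

end StmtThreeAux

open StmtThreeAux Module in
/-- Let `V` be a finite-dimensional real inner product space.  If `J₁` and
`J₂` are two orthogonal complex structures on `V`, then there exists an orthogonal linear
automorphism (linear isometry equivalence) `Q` of `V` with `J₂ = Q ∘ J₁ ∘ Q⁻¹`:
the orthogonal group acts transitively by conjugation on the orthogonal complex structures. -/
theorem stmt_3 {V : Type*} [NormedAddCommGroup V] [InnerProductSpace ℝ V]
    [FiniteDimensional ℝ V]
    (J₁ J₂ : V →ₗ[ℝ] V)
    (hJ₁skew : ∀ x y : V, ⟪J₁ x, y⟫ = -⟪x, J₁ y⟫) (hJ₁2 : J₁ ∘ₗ J₁ = -LinearMap.id)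
    (hJ₂skew : ∀ x y : V, ⟪J₂ x, y⟫ = -⟪x, J₂ y⟫) (hJ₂2 : J₂ ∘ₗ J₂ = -LinearMap.id) :
    ∃ Q : V ≃ₗᵢ[ℝ] V, ∀ x : V, J₂ x = Q (J₁ (Q.symm x)) := by
  haveI h₁ : Fact (IsOCS J₁) := ⟨hJ₁skew, hJ₁2⟩
  haveI h₂ : Fact (IsOCS J₂) := ⟨hJ₂skew, hJ₂2⟩
  have hdim : finrank ℂ (CV J₁) = finrank ℂ (CV J₂) := by
    have h1 := finrank_CV (V := V) J₁
    have h2 := finrank_CV (V := V) J₂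
    omega
  let b₁ := stdOrthonormalBasis ℂ (CV J₁)
  let b₂ := (stdOrthonormalBasis ℂ (CV J₂)).reindex (finCongr hdim.symm)
  let Qc : (CV J₁) ≃ₗᵢ[ℂ] (CV J₂) := b₁.repr.trans b₂.repr.symm
  let Q : V ≃ₗᵢ[ℝ] V :=
    { toLinearEquiv := (Qc.toLinearEquiv.restrictScalars ℝ : CV J₁ ≃ₗ[ℝ] CV J₂)
      norm_map' := Qc.norm_map }
  refine ⟨Q, fun x => ?_⟩
  let v₁ : CV J₁ := show CV J₁ from Q.symm x
  have key : Qc (Complex.I • v₁) = Complex.I • (Qc v₁) := Qc.map_smul _ _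
  have hQc : ∀ v : CV J₁, (show V from Qc v) = Q (show V from v) := fun v => rfl
  have hQcQ : (show V from Qc v₁) = x := Q.apply_symm_apply x
  have lhs : J₂ x = (show V from Complex.I • (Qc v₁)) := by
    rw [I_smul]
    show J₂ x = J₂ (show V from Qc v₁)
    rw [hQcQ]
  have rhs : (show V from Qc (Complex.I • v₁)) = Q (J₁ (Q.symm x)) := by
    rw [I_smul]
    exact hQc _
  rw [lhs, ← key, rhs]
end

section
/- Let V be a real inner product space of dimension n = 2m, let J be an orthogonal complex structure on V, and let e₁, …, e_{2m} be an orthonormal basis of V with J e_{2k−1} = e_{2k} for k = 1, …, m. Define S_{a,b} e_c = √(n/2)·(δ_{ac} e_b − δ_{bc} e_a), and for 1 ≤ r < s ≤ m set A_{r,s} = (1/√2)(S_{2r−1,2s−1} − S_{2r,2s}) and B_{r,s} = (1/√2)(S_{2r−1,2s} + S_{2r,2s−1}). Then { A_{r,s}, B_{r,s} : 1 ≤ r < s ≤ m } is a G-orthonormal basis of the space of skew-adjoint endomorphisms of V anticommuting with J, and B_{r,s} = J ∘ A_{r,s} for all r < s. -/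
open scoped RealInnerProductSpace

/-- The index `2k-1` (1-based), i.e. `2k` (0-based), in `Fin (2m)`. -/
def oddIdx {m : ℕ} (k : Fin m) : Fin (2 * m) := ⟨2 * k.1, by omega⟩

/-- The index `2k` (1-based), i.e. `2k+1` (0-based), in `Fin (2m)`. -/
def evenIdx {m : ℕ} (k : Fin m) : Fin (2 * m) := ⟨2 * k.1 + 1, by omega⟩

section helpers
variable {W : Type*} [NormedAddCommGroup W] [InnerProductSpace ℝ W]
variable {ι : Type*} [Fintype ι] [DecidableEq ι]

lemma trace_eq_sum_inner' (e : OrthonormalBasis ι ℝ W) (T : W →ₗ[ℝ] W) :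
    LinearMap.trace ℝ W T = ∑ i, ⟪e i, T (e i)⟫ := by
  rw [LinearMap.trace_eq_matrix_trace ℝ e.toBasis, Matrix.trace]
  simp [Matrix.diag, LinearMap.toMatrix_apply, OrthonormalBasis.coe_toBasis,
    OrthonormalBasis.coe_toBasis_repr_apply, OrthonormalBasis.repr_apply_apply]

omit [DecidableEq ι] in
lemma skew_of_basis (e : OrthonormalBasis ι ℝ W) (T : W →ₗ[ℝ] W)
    (h : ∀ a b, ⟪T (e a), e b⟫ = -⟪e a, T (e b)⟫) :
    ∀ x y, ⟪T x, y⟫ = -⟪x, T y⟫ := by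
  intro x y
  rw [← e.sum_repr' x, ← e.sum_repr' y]
  simp only [map_sum, map_smul, sum_inner, inner_sum, real_inner_smul_left,
    real_inner_smul_right, smul_eq_mul, h]
  rw [Finset.sum_comm]
  simp [Finset.mul_sum, Finset.sum_neg_distrib]
  ring_nf
  rw [Finset.sum_comm]

lemma elementary_skew (e : OrthonormalBasis ι ℝ W) (γ : ℝ) (a b : ι) (T : W →ₗ[ℝ] W)
    (hT : ∀ c, T (e c) = γ • (((if c = a then (1:ℝ) else 0) • e b)
      - ((if c = b then (1:ℝ) else 0) • e a))) :
    ∀ x y, ⟪T x, y⟫ = -⟪x, T y⟫ := by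
  apply skew_of_basis e
  intro c d
  have he : ∀ i j : ι, ⟪e i, e j⟫ = if i = j then (1:ℝ) else 0 :=
    orthonormal_iff_ite.mp e.orthonormal
  simp only [hT, real_inner_smul_left, real_inner_smul_right, inner_sub_left, inner_sub_right,
    he]
  clear hT he
  split_ifs <;> subst_vars <;> simp_all <;> ring

lemma sum_delta_mul (x y : ι) (K : ℝ) :
    ∑ c, (if c = x then (1:ℝ) else 0) * (if c = y then 1 else 0) * K
      = (if x = y then 1 else 0) * K := by
  rw [Finset.sum_eq_single x]
  · simp
  · intro c _ hc; simp [hc]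
  · intro h; exact absurd (Finset.mem_univ x) h

set_option maxHeartbeats 1000000 in
lemma elementary_trace (e : OrthonormalBasis ι ℝ W) (γ δ : ℝ) (a b a' b' : ι)
    (T T' : W →ₗ[ℝ] W)
    (hT : ∀ c, T (e c) = γ • (((if c = a then (1:ℝ) else 0) • e b)
      - ((if c = b then (1:ℝ) else 0) • e a)))
    (hT' : ∀ c, T' (e c) = δ • (((if c = a' then (1:ℝ) else 0) • e b')
      - ((if c = b' then (1:ℝ) else 0) • e a'))) :
    LinearMap.trace ℝ W (T ∘ₗ T') =
      2 * γ * δ * ((if a = b' then (1:ℝ) else 0) * (if b = a' then 1 else 0)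
        - (if a = a' then (1:ℝ) else 0) * (if b = b' then 1 else 0)) := by
  have he : ∀ i j : ι, ⟪e i, e j⟫ = if i = j then (1:ℝ) else 0 :=
    orthonormal_iff_ite.mp e.orthonormal
  rw [trace_eq_sum_inner' e]
  have hsum : ∀ c, ⟪e c, (T ∘ₗ T') (e c)⟫ =
      (if c = a' then (1:ℝ) else 0) * (if c = b then 1 else 0) * (γ*δ*(if b' = a then 1 else 0))
    + (if c = a' then (1:ℝ) else 0) * (if c = a then 1 else 0) * (-(γ*δ)*(if b' = b then 1 else 0))
    + (if c = b' then (1:ℝ) else 0) * (if c = b then 1 else 0) * (-(γ*δ)*(if a' = a then 1 else 0))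
    + (if c = b' then (1:ℝ) else 0) * (if c = a then 1 else 0) * (γ*δ*(if a' = b then 1 else 0)) := by
    intro c
    simp only [LinearMap.comp_apply, hT', map_smul, map_sub, hT]
    simp only [smul_sub, smul_smul, inner_sub_right, inner_smul_right, real_inner_smul_right,
      he]
    clear hT hT' he
    split_ifs <;> ring
  rw [Finset.sum_congr rfl (fun c _ => hsum c)]
  clear hsum hT hT' he
  rw [Finset.sum_add_distrib, Finset.sum_add_distrib, Finset.sum_add_distrib,
    sum_delta_mul, sum_delta_mul, sum_delta_mul, sum_delta_mul]
  split_ifs <;> subst_vars <;> simp_all <;> ring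


omit [DecidableEq ι] in
lemma eq_of_inner_basis (e : OrthonormalBasis ι ℝ W) {x y : W}
    (h : ∀ i, ⟪e i, x⟫ = ⟪e i, y⟫) : x = y := by
  apply e.repr.injective
  ext i
  simpa [OrthonormalBasis.repr_apply_apply] using h i

lemma dsum {n : ℕ} (k l : Fin n) (f : Fin n → Fin n → ℝ) :
    ∑ r, ∑ s, (if k = r then (1:ℝ) else 0) * (if l = s then 1 else 0) * f r s = f k l := by
  rw [Finset.sum_eq_single k]
  · rw [Finset.sum_eq_single l]
    · simp
    · intro s _ hs; simp [Ne.symm hs]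
    · simp
  · intro r _ hr; simp [Ne.symm hr]
  · simp


end helpers


@[simp] lemma oddIdx_inj {m : ℕ} {k l : Fin m} : oddIdx k = oddIdx l ↔ k = l := by
  simp [oddIdx, Fin.ext_iff]
@[simp] lemma evenIdx_inj {m : ℕ} {k l : Fin m} : evenIdx k = evenIdx l ↔ k = l := by
  simp [evenIdx, Fin.ext_iff]
@[simp] lemma oddIdx_ne_evenIdx {m : ℕ} {k l : Fin m} : (oddIdx k = evenIdx l) ↔ False := by
  simp [oddIdx, evenIdx, Fin.ext_iff]; omega
@[simp] lemma evenIdx_ne_oddIdx {m : ℕ} {k l : Fin m} : (evenIdx k = oddIdx l) ↔ False := by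
  simp [oddIdx, evenIdx, Fin.ext_iff]; omega

lemma idx_cases {m : ℕ} (c : Fin (2 * m)) :
    (∃ k, c = oddIdx k) ∨ (∃ k, c = evenIdx k) := by
  rcases Nat.even_or_odd c.1 with h | h
  · exact Or.inl ⟨⟨c.1 / 2, by omega⟩, by obtain ⟨t,ht⟩ := h; simp [oddIdx, Fin.ext_iff]; omega⟩
  · exact Or.inr ⟨⟨c.1 / 2, by omega⟩, by obtain ⟨t,ht⟩ := h; simp [evenIdx, Fin.ext_iff]; omega⟩

set_option maxHeartbeats 1000000 in
/-- Let `V` be a real inner product space of dimension `n = 2m`, `J` an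
orthogonal complex structure on `V` and `e₁, …, e_{2m}` an orthonormal basis with
`J e_{2k−1} = e_{2k}`.  With `S_{a,b} e_c = √(n/2)(δ_{ac}e_b − δ_{bc}e_a)`,
`A_{r,s} = (1/√2)(S_{2r−1,2s−1} − S_{2r,2s})` and `B_{r,s} = (1/√2)(S_{2r−1,2s} + S_{2r,2s−1})`,
the family `{A_{r,s}, B_{r,s} : r < s}` is a `G`-orthonormal basis of the space of
skew-adjoint endomorphisms of `V` anticommuting with `J`, and `B_{r,s} = J ∘ A_{r,s}`. -/
theorem stmt_6 {V : Type*} [NormedAddCommGroup V] [InnerProductSpace ℝ V]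
    (m : ℕ) (e : OrthonormalBasis (Fin (2 * m)) ℝ V)
    (J : V →ₗ[ℝ] V) (hJskew : ∀ x y : V, ⟪J x, y⟫ = -⟪x, J y⟫)
    (hJ2 : J ∘ₗ J = -LinearMap.id)
    (hJe : ∀ k : Fin m, J (e (oddIdx k)) = e (evenIdx k))
    (S : Fin (2 * m) → Fin (2 * m) → (V →ₗ[ℝ] V))
    (hS : ∀ a b c : Fin (2 * m), S a b (e c) =
      Real.sqrt ((2 * m : ℝ) / 2) •
        (((if c = a then (1 : ℝ) else 0) • e b) - ((if c = b then (1 : ℝ) else 0) • e a)))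
    (A B : Fin m → Fin m → (V →ₗ[ℝ] V))
    (hA : ∀ r s : Fin m, A r s =
      (Real.sqrt 2)⁻¹ • (S (oddIdx r) (oddIdx s) - S (evenIdx r) (evenIdx s)))
    (hB : ∀ r s : Fin m, B r s =
      (Real.sqrt 2)⁻¹ • (S (oddIdx r) (evenIdx s) + S (evenIdx r) (oddIdx s))) :
    -- each `A_{r,s}` and `B_{r,s}` is skew-adjoint and anticommutes with `J`
    (∀ r s : Fin m, r < s →
      (∀ x y : V, ⟪A r s x, y⟫ = -⟪x, A r s y⟫) ∧ A r s ∘ₗ J = -(J ∘ₗ A r s) ∧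
      (∀ x y : V, ⟪B r s x, y⟫ = -⟪x, B r s y⟫) ∧ B r s ∘ₗ J = -(J ∘ₗ B r s)) ∧
    -- `B_{r,s} = J ∘ A_{r,s}`
    (∀ r s : Fin m, r < s → B r s = J ∘ₗ A r s) ∧
    -- `G`-orthonormality of the family `{A_{r,s}, B_{r,s} : r < s}`
    (∀ r s : Fin m, r < s →
      -(1 / (2 * m : ℝ)) * LinearMap.trace ℝ V (A r s ∘ₗ A r s) = 1 ∧
      -(1 / (2 * m : ℝ)) * LinearMap.trace ℝ V (B r s ∘ₗ B r s) = 1) ∧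
    (∀ r s r' s' : Fin m, r < s → r' < s' →
      -(1 / (2 * m : ℝ)) * LinearMap.trace ℝ V (A r s ∘ₗ B r' s') = 0) ∧
    (∀ r s r' s' : Fin m, r < s → r' < s' → (r, s) ≠ (r', s') →
      -(1 / (2 * m : ℝ)) * LinearMap.trace ℝ V (A r s ∘ₗ A r' s') = 0 ∧
      -(1 / (2 * m : ℝ)) * LinearMap.trace ℝ V (B r s ∘ₗ B r' s') = 0) ∧
    -- the family spans the space of skew-adjoint endomorphisms anticommuting with `J`
    (∀ Q : V →ₗ[ℝ] V, (∀ x y : V, ⟪Q x, y⟫ = -⟪x, Q y⟫) → Q ∘ₗ J = -(J ∘ₗ Q) →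
      Q ∈ Submodule.span ℝ
        {T : V →ₗ[ℝ] V | ∃ r s : Fin m, r < s ∧ (T = A r s ∨ T = B r s)}) := by
  set γ : ℝ := Real.sqrt ((2 * m : ℝ) / 2) with hγ
  have hγ2 : γ * γ = (m : ℝ) := by
    rw [hγ, Real.mul_self_sqrt (by positivity)]; ring
  have h2 : ((Real.sqrt 2)⁻¹ : ℝ) * (Real.sqrt 2)⁻¹ = 1/2 := by
    rw [← mul_inv, Real.mul_self_sqrt (by norm_num)]; norm_num
  set κ : ℝ := (Real.sqrt 2)⁻¹ * γ with hκ
  have hκ2 : κ * κ = (m : ℝ) / 2 := by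
    rw [hκ]; nlinarith [hγ2, h2]
  have he : ∀ i j : Fin (2*m), ⟪e i, e j⟫ = if i = j then (1:ℝ) else 0 :=
    orthonormal_iff_ite.mp e.orthonormal
  have hJev : ∀ k : Fin m, J (e (evenIdx k)) = -(e (oddIdx k)) := by
    intro k
    have := congrArg (fun f : V →ₗ[ℝ] V => f (e (oddIdx k))) hJ2
    simp only [LinearMap.comp_apply, LinearMap.neg_apply, LinearMap.id_apply, hJe] at this
    rw [this]
  have hAe : ∀ r s : Fin m, ∀ c, A r s (e c) =
      κ • (((if c = oddIdx r then (1:ℝ) else 0) • e (oddIdx s))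
        - ((if c = oddIdx s then (1:ℝ) else 0) • e (oddIdx r))
        - ((if c = evenIdx r then (1:ℝ) else 0) • e (evenIdx s))
        + ((if c = evenIdx s then (1:ℝ) else 0) • e (evenIdx r))) := by
    intro r s c
    rw [hA]
    simp only [LinearMap.smul_apply, LinearMap.sub_apply, hS, ← hγ, hκ, smul_sub, smul_smul]
    module
  have hBe : ∀ r s : Fin m, ∀ c, B r s (e c) =
      κ • (((if c = oddIdx r then (1:ℝ) else 0) • e (evenIdx s))
        - ((if c = evenIdx s then (1:ℝ) else 0) • e (oddIdx r))
        + ((if c = evenIdx r then (1:ℝ) else 0) • e (oddIdx s))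
        - ((if c = oddIdx s then (1:ℝ) else 0) • e (evenIdx r))) := by
    intro r s c
    rw [hB]
    simp only [LinearMap.smul_apply, LinearMap.add_apply, hS, ← hγ, hκ, smul_sub, smul_add, smul_smul]
    module
  have hSskew : ∀ a b : Fin (2*m), ∀ x y : V, ⟪S a b x, y⟫ = -⟪x, S a b y⟫ :=
    fun a b => elementary_skew e γ a b (S a b) (hS a b)
  have hAskew : ∀ r s : Fin m, ∀ x y : V, ⟪A r s x, y⟫ = -⟪x, A r s y⟫ := by
    intro r s x y
    rw [hA]
    simp only [LinearMap.smul_apply, LinearMap.sub_apply, inner_sub_left, inner_sub_right,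
      real_inner_smul_left, real_inner_smul_right, hSskew]
    ring
  have hBskew : ∀ r s : Fin m, ∀ x y : V, ⟪B r s x, y⟫ = -⟪x, B r s y⟫ := by
    intro r s x y
    rw [hB]
    simp only [LinearMap.smul_apply, LinearMap.add_apply, inner_add_left, inner_add_right,
      real_inner_smul_left, real_inner_smul_right, hSskew]
    ring
  have hAJ : ∀ r s : Fin m, A r s ∘ₗ J = -(J ∘ₗ A r s) := by
    intro r s
    apply e.toBasis.ext
    intro c
    rcases idx_cases c with ⟨k, rfl⟩ | ⟨k, rfl⟩ <;>
    · simp only [OrthonormalBasis.coe_toBasis, LinearMap.comp_apply, LinearMap.neg_apply,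
        hJe, hJev, hAe, map_smul, map_sub, map_add, map_neg, ite_smul, one_smul, zero_smul,
        smul_sub, smul_add, smul_neg, oddIdx_inj, evenIdx_inj, oddIdx_ne_evenIdx,
        evenIdx_ne_oddIdx, if_false, apply_ite J, map_zero]
      try simp only [hJe, hJev]
      split_ifs <;> module
  have hBA : ∀ r s : Fin m, B r s = J ∘ₗ A r s := by
    intro r s
    apply e.toBasis.ext
    intro c
    rcases idx_cases c with ⟨k, rfl⟩ | ⟨k, rfl⟩ <;>
    · simp only [OrthonormalBasis.coe_toBasis, LinearMap.comp_apply, hAe, hBe, map_smul,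
        map_sub, map_add, map_neg, ite_smul, one_smul, zero_smul, smul_sub, smul_add, smul_neg,
        oddIdx_inj, evenIdx_inj, oddIdx_ne_evenIdx, evenIdx_ne_oddIdx, if_false,
        apply_ite J, map_zero]
      try simp only [hJe, hJev]
      split_ifs <;> module
  have hBJ : ∀ r s : Fin m, B r s ∘ₗ J = -(J ∘ₗ B r s) := by
    intro r s
    rw [hBA, LinearMap.comp_assoc, hAJ]
    ext x
    simp
  have htr : ∀ a b a' b' : Fin (2*m), LinearMap.trace ℝ V (S a b ∘ₗ S a' b') =
      2 * γ * γ * ((if a = b' then (1:ℝ) else 0) * (if b = a' then 1 else 0)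
        - (if a = a' then (1:ℝ) else 0) * (if b = b' then 1 else 0)) :=
    fun a b a' b' => elementary_trace e γ γ a b a' b' _ _ (hS a b) (hS a' b')
  refine ⟨fun r s hrs => ⟨hAskew r s, hAJ r s, hBskew r s, hBJ r s⟩, fun r s _ => hBA r s,
    ?_, ?_, ?_, ?_⟩
  · intro r s hrs
    have hm : (m:ℝ) ≠ 0 := by
      have := r.2; have : 0 < m := by omega
      exact_mod_cast Nat.cast_ne_zero.mpr (by omega)
    have hne : r ≠ s := ne_of_lt hrs
    constructor
    · rw [hA]
      simp only [LinearMap.smul_comp, LinearMap.comp_smul, LinearMap.sub_comp,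
        LinearMap.comp_sub, map_smul, map_sub, smul_eq_mul, htr, oddIdx_inj, evenIdx_inj,
        oddIdx_ne_evenIdx, evenIdx_ne_oddIdx, if_false, if_true]
      simp only [hne, if_false, if_true, eq_self_iff_true, hne.symm]
      have hX : ((Real.sqrt 2)⁻¹:ℝ) * (Real.sqrt 2)⁻¹ * (γ*γ) = (m:ℝ)/2 := by
        rw [h2, hγ2]; ring
      have hX2 : γ * γ * Real.sqrt 2 = (m:ℝ) * Real.sqrt 2 := by rw [hγ2]
      field_simp
      rw [Real.sq_sqrt (by norm_num : (0:ℝ) ≤ 2)]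
      nlinarith [hX, hγ2, h2, hX2]
    · rw [hB]
      simp only [LinearMap.smul_comp, LinearMap.comp_smul, LinearMap.add_comp,
        LinearMap.comp_add, map_smul, map_add, smul_eq_mul, htr, oddIdx_inj, evenIdx_inj,
        oddIdx_ne_evenIdx, evenIdx_ne_oddIdx, if_false, if_true]
      simp only [hne, if_false, if_true, eq_self_iff_true, hne.symm]
      have hX : ((Real.sqrt 2)⁻¹:ℝ) * (Real.sqrt 2)⁻¹ * (γ*γ) = (m:ℝ)/2 := by
        rw [h2, hγ2]; ring
      have hX2 : γ * γ * Real.sqrt 2 = (m:ℝ) * Real.sqrt 2 := by rw [hγ2]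
      field_simp
      rw [Real.sq_sqrt (by norm_num : (0:ℝ) ≤ 2)]
      nlinarith [hX, hγ2, h2, hX2]
  · intro r s r' s' hrs hr's'
    rw [hA r s, hB r' s']
    simp only [LinearMap.smul_comp, LinearMap.comp_smul, LinearMap.sub_comp,
      LinearMap.comp_sub, LinearMap.add_comp, LinearMap.comp_add, map_smul, map_sub, map_add,
      smul_eq_mul, htr, oddIdx_inj, evenIdx_inj, oddIdx_ne_evenIdx, evenIdx_ne_oddIdx,
      if_false, if_true]
    ring
  · intro r s r' s' hrs hr's' hne
    have hne1 : ¬(r = r' ∧ s = s') := by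
      intro ⟨h1, h2⟩; exact hne (by simp [h1, h2])
    have hne2 : ¬(r = s' ∧ s = r') := by
      intro ⟨h1, h2⟩; subst h1; subst h2; exact absurd hrs (not_lt.mpr hr's'.le)
    constructor
    · rw [hA r s, hA r' s']
      simp only [LinearMap.smul_comp, LinearMap.comp_smul, LinearMap.sub_comp,
        LinearMap.comp_sub, map_smul, map_sub, smul_eq_mul, htr, oddIdx_inj, evenIdx_inj,
        oddIdx_ne_evenIdx, evenIdx_ne_oddIdx, if_false, if_true]
      split_ifs <;> first | ring1 | (exfalso; tauto)
    · rw [hB r s, hB r' s']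
      simp only [LinearMap.smul_comp, LinearMap.comp_smul, LinearMap.add_comp,
        LinearMap.comp_add, map_smul, map_add, smul_eq_mul, htr, oddIdx_inj, evenIdx_inj,
        oddIdx_ne_evenIdx, evenIdx_ne_oddIdx, if_false, if_true]
      split_ifs <;> first | ring1 | (exfalso; tauto)
  · intro Q hQskew hQJ
    have hanti : ∀ x y : V, ⟪Q x, y⟫ = -⟪Q y, x⟫ := by
      intro x y; rw [hQskew, real_inner_comm]
    have hQJe : ∀ k : Fin m, Q (e (evenIdx k)) = -(J (Q (e (oddIdx k)))) := by
      intro k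
      have := congrArg (fun f : V →ₗ[ℝ] V => f (e (oddIdx k))) hQJ
      simp only [LinearMap.comp_apply, LinearMap.neg_apply, hJe] at this
      rw [this]
    have hq1 : ∀ k l : Fin m,
        ⟪Q (e (evenIdx k)), e (oddIdx l)⟫ = ⟪Q (e (oddIdx k)), e (evenIdx l)⟫ := by
      intro k l
      rw [hQJe, ← hJe l, inner_neg_left, hJskew, neg_neg]
    have hq2 : ∀ k l : Fin m,
        ⟪Q (e (evenIdx k)), e (evenIdx l)⟫ = -⟪Q (e (oddIdx k)), e (oddIdx l)⟫ := by
      intro k l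
      rw [hQJe, inner_neg_left, hJskew, neg_neg, hJev, inner_neg_right]
    have hQT : Q = ∑ r : Fin m, ∑ s : Fin m,
        (if r < s then ((⟪Q (e (oddIdx r)), e (oddIdx s)⟫ / κ) • A r s
          + (⟪Q (e (oddIdx r)), e (evenIdx s)⟫ / κ) • B r s) else 0) := by
      apply e.toBasis.ext
      intro c
      apply eq_of_inner_basis e
      intro d
      simp only [OrthonormalBasis.coe_toBasis, LinearMap.sum_apply, inner_sum]
      have hm0 : 0 < m := by have := c.2; omega
      have hκ0 : κ ≠ 0 := by
        intro h
        rw [h] at hκ2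
        have h0 : (m:ℝ) = 0 := by linarith [hκ2]
        have : m = 0 := by exact_mod_cast h0
        omega
      have discard : True := trivial
      rcases idx_cases c with ⟨k, rfl⟩ | ⟨k, rfl⟩ <;> rcases idx_cases d with ⟨l, rfl⟩ | ⟨l, rfl⟩
      · -- c odd, d odd
        have step : ∀ r s : Fin m, ⟪e (oddIdx l), (if r < s then
              ((⟪Q (e (oddIdx r)), e (oddIdx s)⟫ / κ) • A r s
              + (⟪Q (e (oddIdx r)), e (evenIdx s)⟫ / κ) • B r s) else 0) (e (oddIdx k))⟫
            = (if k = r then (1:ℝ) else 0) * (if l = s then 1 else 0) *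
                (if r < s then (⟪Q (e (oddIdx r)), e (oddIdx s)⟫ / κ) * κ else 0)
              + (if l = r then (1:ℝ) else 0) * (if k = s then 1 else 0) *
                (if r < s then -((⟪Q (e (oddIdx r)), e (oddIdx s)⟫ / κ) * κ) else 0) := by
          intro r s
          by_cases hrs : r < s
          · simp only [if_pos hrs, LinearMap.add_apply, LinearMap.smul_apply,
              inner_add_right, real_inner_smul_right, hAe, hBe, inner_sub_right,
              he, oddIdx_inj, evenIdx_inj, oddIdx_ne_evenIdx, evenIdx_ne_oddIdx, if_false]
            split_ifs <;> ring1
          · simp [if_neg hrs]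
        rw [Finset.sum_congr rfl (fun r _ => Finset.sum_congr rfl (fun s _ => step r s))]
        simp only [Finset.sum_add_distrib]
        rw [dsum k l, dsum l k]
        simp only [div_mul_cancel₀ _ hκ0]
        rcases lt_trichotomy k l with h | h | h
        · rw [if_pos h, if_neg (not_lt.mpr h.le), real_inner_comm]
          ring
        · subst h
          rw [if_neg (lt_irrefl k), if_neg (lt_irrefl k)]
          have h1 := hanti (e (oddIdx k)) (e (oddIdx k))
          have h2 := real_inner_comm (Q (e (oddIdx k))) (e (oddIdx k))
          linarith [hQskew (e (oddIdx k)) (e (oddIdx k)), real_inner_comm (e (oddIdx k)) (Q (e (oddIdx k)))]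
        · rw [if_neg (not_lt.mpr h.le), if_pos h]
          have h1 := hQskew (e (oddIdx l)) (e (oddIdx k))
          linarith
      · -- c odd, d even
        have step : ∀ r s : Fin m, ⟪e (evenIdx l), (if r < s then
              ((⟪Q (e (oddIdx r)), e (oddIdx s)⟫ / κ) • A r s
              + (⟪Q (e (oddIdx r)), e (evenIdx s)⟫ / κ) • B r s) else 0) (e (oddIdx k))⟫
            = (if k = r then (1:ℝ) else 0) * (if l = s then 1 else 0) *
                (if r < s then (⟪Q (e (oddIdx r)), e (evenIdx s)⟫ / κ) * κ else 0)
              + (if l = r then (1:ℝ) else 0) * (if k = s then 1 else 0) *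
                (if r < s then -((⟪Q (e (oddIdx r)), e (evenIdx s)⟫ / κ) * κ) else 0) := by
          intro r s
          by_cases hrs : r < s
          · simp only [if_pos hrs, LinearMap.add_apply, LinearMap.smul_apply,
              inner_add_right, real_inner_smul_right, hAe, hBe, inner_sub_right,
              he, oddIdx_inj, evenIdx_inj, oddIdx_ne_evenIdx, evenIdx_ne_oddIdx, if_false]
            split_ifs <;> ring1
          · simp [if_neg hrs]
        rw [Finset.sum_congr rfl (fun r _ => Finset.sum_congr rfl (fun s _ => step r s))]
        simp only [Finset.sum_add_distrib]
        rw [dsum k l, dsum l k]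
        simp only [div_mul_cancel₀ _ hκ0]
        rcases lt_trichotomy k l with h | h | h
        · rw [if_pos h, if_neg (not_lt.mpr h.le), real_inner_comm]
          ring
        · subst h
          rw [if_neg (lt_irrefl k), if_neg (lt_irrefl k)]
          have h1 := hq1 k k
          have h2 := hanti (e (oddIdx k)) (e (evenIdx k))
          have h3 := real_inner_comm (e (evenIdx k)) (Q (e (oddIdx k)))
          linarith
        · rw [if_neg (not_lt.mpr h.le), if_pos h]
          have h1 := hq1 l k
          have h2 := hanti (e (oddIdx k)) (e (evenIdx l))
          have h3 := real_inner_comm (e (evenIdx l)) (Q (e (oddIdx k)))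
          have h4 := hanti (e (evenIdx l)) (e (oddIdx k))
          have h5 := hq1 l k
          -- goal: ⟪e (evenIdx l), Q (e (oddIdx k))⟫ = -⟪Q (e (oddIdx l)), e (evenIdx k)⟫
          have h6 := hanti (e (oddIdx l)) (e (evenIdx k))
          have h7 := hanti (Q (e (evenIdx l))) (e (oddIdx k))
          have h8 : ⟪Q (e (oddIdx l)), e (evenIdx k)⟫ = ⟪Q (e (evenIdx l)), e (oddIdx k)⟫ := by
            rw [hq1 l k]
          have h9 := hanti (e (evenIdx l)) (e (oddIdx k))
          linarith [real_inner_comm (e (evenIdx l)) (Q (e (oddIdx k))),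
            hanti (e (evenIdx l)) (e (oddIdx k)), hq1 l k]
      · -- c even, d odd
        have step : ∀ r s : Fin m, ⟪e (oddIdx l), (if r < s then
              ((⟪Q (e (oddIdx r)), e (oddIdx s)⟫ / κ) • A r s
              + (⟪Q (e (oddIdx r)), e (evenIdx s)⟫ / κ) • B r s) else 0) (e (evenIdx k))⟫
            = (if k = r then (1:ℝ) else 0) * (if l = s then 1 else 0) *
                (if r < s then (⟪Q (e (oddIdx r)), e (evenIdx s)⟫ / κ) * κ else 0)
              + (if l = r then (1:ℝ) else 0) * (if k = s then 1 else 0) *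
                (if r < s then -((⟪Q (e (oddIdx r)), e (evenIdx s)⟫ / κ) * κ) else 0) := by
          intro r s
          by_cases hrs : r < s
          · simp only [if_pos hrs, LinearMap.add_apply, LinearMap.smul_apply,
              inner_add_right, real_inner_smul_right, hAe, hBe, inner_sub_right,
              he, oddIdx_inj, evenIdx_inj, oddIdx_ne_evenIdx, evenIdx_ne_oddIdx, if_false]
            split_ifs <;> ring1
          · simp [if_neg hrs]
        rw [Finset.sum_congr rfl (fun r _ => Finset.sum_congr rfl (fun s _ => step r s))]
        simp only [Finset.sum_add_distrib]
        rw [dsum k l, dsum l k]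
        simp only [div_mul_cancel₀ _ hκ0]
        rcases lt_trichotomy k l with h | h | h
        · rw [if_pos h, if_neg (not_lt.mpr h.le)]
          have h1 := hq1 k l
          have h2 := real_inner_comm (e (oddIdx l)) (Q (e (evenIdx k)))
          linarith
        · subst h
          rw [if_neg (lt_irrefl k), if_neg (lt_irrefl k)]
          have h1 := hq1 k k
          have h2 := hanti (e (evenIdx k)) (e (oddIdx k))
          have h3 := real_inner_comm (e (oddIdx k)) (Q (e (evenIdx k)))
          linarith
        · rw [if_neg (not_lt.mpr h.le), if_pos h]
          have h1 := hq1 k l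
          have h2 := hanti (e (evenIdx k)) (e (oddIdx l))
          have h3 := real_inner_comm (e (oddIdx l)) (Q (e (evenIdx k)))
          have h4 := hanti (e (oddIdx l)) (e (evenIdx k))
          linarith [hq1 l k, hanti (e (oddIdx l)) (e (evenIdx k)),
            real_inner_comm (e (oddIdx l)) (Q (e (evenIdx k)))]
      · -- c even, d even
        have step : ∀ r s : Fin m, ⟪e (evenIdx l), (if r < s then
              ((⟪Q (e (oddIdx r)), e (oddIdx s)⟫ / κ) • A r s
              + (⟪Q (e (oddIdx r)), e (evenIdx s)⟫ / κ) • B r s) else 0) (e (evenIdx k))⟫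
            = (if k = r then (1:ℝ) else 0) * (if l = s then 1 else 0) *
                (if r < s then -((⟪Q (e (oddIdx r)), e (oddIdx s)⟫ / κ) * κ) else 0)
              + (if l = r then (1:ℝ) else 0) * (if k = s then 1 else 0) *
                (if r < s then (⟪Q (e (oddIdx r)), e (oddIdx s)⟫ / κ) * κ else 0) := by
          intro r s
          by_cases hrs : r < s
          · simp only [if_pos hrs, LinearMap.add_apply, LinearMap.smul_apply,
              inner_add_right, real_inner_smul_right, hAe, hBe, inner_sub_right,
              he, oddIdx_inj, evenIdx_inj, oddIdx_ne_evenIdx, evenIdx_ne_oddIdx, if_false]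
            split_ifs <;> ring1
          · simp [if_neg hrs]
        rw [Finset.sum_congr rfl (fun r _ => Finset.sum_congr rfl (fun s _ => step r s))]
        simp only [Finset.sum_add_distrib]
        rw [dsum k l, dsum l k]
        simp only [div_mul_cancel₀ _ hκ0]
        rcases lt_trichotomy k l with h | h | h
        · rw [if_pos h, if_neg (not_lt.mpr h.le)]
          have h1 := hq2 k l
          have h2 := real_inner_comm (e (evenIdx l)) (Q (e (evenIdx k)))
          linarith
        · subst h
          rw [if_neg (lt_irrefl k), if_neg (lt_irrefl k)]
          have h1 := hanti (e (evenIdx k)) (e (evenIdx k))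
          linarith [real_inner_comm (e (evenIdx k)) (Q (e (evenIdx k))),
            hanti (e (evenIdx k)) (e (evenIdx k)),
            hQskew (e (evenIdx k)) (e (evenIdx k))]
        · rw [if_neg (not_lt.mpr h.le), if_pos h]
          have h1 := hq2 k l
          have h2 := real_inner_comm (e (evenIdx l)) (Q (e (evenIdx k)))
          have h3 := hanti (e (oddIdx l)) (e (oddIdx k))
          linarith [hq2 k l, real_inner_comm (e (evenIdx l)) (Q (e (evenIdx k))),
            hanti (e (oddIdx l)) (e (oddIdx k)),
            hanti (e (evenIdx k)) (e (evenIdx l))]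
    rw [hQT]
    refine Submodule.sum_mem _ (fun r _ => Submodule.sum_mem _ (fun s _ => ?_))
    by_cases hrs : r < s
    · rw [if_pos hrs]
      exact Submodule.add_mem _
        (Submodule.smul_mem _ _ (Submodule.subset_span ⟨r, s, hrs, Or.inl rfl⟩))
        (Submodule.smul_mem _ _ (Submodule.subset_span ⟨r, s, hrs, Or.inr rfl⟩))
    · rw [if_neg hrs]
      exact Submodule.zero_mem _
end
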